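/- The language L = a*ba* ∪ a^+ over Σ = {a, b} is the maximal language Red(Φ) defined by the non-conflictual tagged 3-word set Φ = {#[b, a]b, #⊙#, #[a, b]#, a⊙a, b[a, a]#}. -/

import Mathlib

/-!
Common framework from the paper "Higher-order Operator Precedence Languages":
tagged words over an alphabet `α` (with a distinguished end-mark letter
`hash`), the tag set Δ = {[, ], ⊙}, tagged `k`-word factors, conflictual sets,
the strictly-locally-testable tagged language `Loc(Φ)`, handles, reductions
`⇝_Φ`, and the (tagged) maximal languages `RedBar Φ` / `Red Φ`.

Conventions: an end-word `⍟` is the alternating word `(#⊙)^m #` of (tagged)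
length `k-2`, so that it contributes `(k-1)/2` end-marks on each side,
matching all the examples of the paper.
-/

namespace HOP

/-- The three tags `[`, `]`, `⊙`. -/
inductive Tagg : Type where
  | lb : Tagg
  | rb : Tagg
  | dot : Tagg
deriving DecidableEq

/-- Symbols: either a terminal letter of `α` or a tag. -/
abbrev Sym (α : Type) := α ⊕ Tagg

/-- The projection `σ` erasing all tags. -/
def erase {α : Type} (w : List (Sym α)) : List α := w.filterMap Sum.getLeft?

/-- Tagged words: words in `Σ(ΔΣ)*`, i.e. alternating terminals and tags,
beginning and ending with a terminal. -/
inductive IsTagged {α : Type} : List (Sym α) → Prop where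
  | single (a : α) : IsTagged [Sum.inl a]
  | cons (a : α) (t : Tagg) {w : List (Sym α)} :
      IsTagged w → IsTagged (Sum.inl a :: Sum.inr t :: w)

/-- `φ_k(w)`: the set of tagged `k`-words occurring as factors of `w`. -/
def taggedFactors {α : Type} (k : ℕ) (w : List (Sym α)) : Set (List (Sym α)) :=
  {u | u.length = k ∧ IsTagged u ∧ u <:+: w}

/-- A set of tagged words is conflictual iff it contains two distinct words
with the same tag-erasure. -/
def Conflictual {α : Type} (S : Set (List (Sym α))) : Prop :=
  ∃ x ∈ S, ∃ y ∈ S, x ≠ y ∧ erase x = erase y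

def NonConflictual {α : Type} (S : Set (List (Sym α))) : Prop := ¬ Conflictual S

/-- `S` is a set of tagged `k`-words. -/
def TaggedKWords {α : Type} (k : ℕ) (S : Set (List (Sym α))) : Prop :=
  ∀ u ∈ S, IsTagged u ∧ u.length = k

/-- `hashWord hash n = # ⊙ # ⊙ … #` with `n+1` end-marks (tagged length `2n+1`). -/
def hashWord {α : Type} (hash : α) : ℕ → List (Sym α)
  | 0 => [Sum.inl hash]
  | n + 1 => Sum.inl hash :: Sum.inr Tagg.dot :: hashWord hash n

/-- The end-word `⍟ ∈ (#⊙)*#` used with width `k`: it has tagged length `k-2`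
(for odd `k ≥ 3`), i.e. `(k-1)/2` end-marks. -/
def endwFor {α : Type} (hash : α) (k : ℕ) : List (Sym α) := hashWord hash ((k - 3) / 2)

/-- `wrap hash k w = ⍟ [ w ] ⍟`. -/
def wrap {α : Type} (hash : α) (k : ℕ) (w : List (Sym α)) : List (Sym α) :=
  endwFor hash k ++ Sum.inr Tagg.lb :: (w ++ Sum.inr Tagg.rb :: endwFor hash k)

/-- `finalWord hash k = ⍟ ⊙ ⍟`, the target of a complete reduction. -/
def finalWord {α : Type} (hash : α) (k : ℕ) : List (Sym α) :=
  endwFor hash k ++ Sum.inr Tagg.dot :: endwFor hash k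

/-- The (full-word form of the) `k`-strictly-locally-testable tagged language:
all tagged `k`-word factors belong to `Φ`.  A tagged word `w` is in `Loc(Φ)`
in the sense of the paper iff `wrap hash k w ∈ LocFull k Φ`. -/
def LocFull {α : Type} (k : ℕ) (Φ : Set (List (Sym α))) : Set (List (Sym α)) :=
  {w | IsTagged w ∧ taggedFactors k w ⊆ Φ}

/-- `Loc(Φ)` as a set of tagged words `w` (tested on `⍟[w]⍟`). -/
def LocTagged {α : Type} (hash : α) (k : ℕ) (Φ : Set (List (Sym α))) :
    Set (List (Sym α)) :=
  {w | IsTagged w ∧ wrap hash k w ∈ LocFull k Φ}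

/-- The body `x` of a handle `[x]`: a tagged word over `Σ - {#}` whose tags are
all `⊙`. -/
def IsHandleBody {α : Type} (hash : α) (x : List (Sym α)) : Prop :=
  IsTagged x ∧ (∀ t : Tagg, Sum.inr t ∈ x → t = Tagg.dot) ∧ Sum.inl hash ∉ x

/-- One reduction step `w[x]z ⇝_Φ w s z`, allowed when `[x]` is a handle and
both source and target have all their tagged `k`-factors in `Φ`. -/
def RStep {α : Type} (hash : α) (k : ℕ) (Φ : Set (List (Sym α)))
    (u v : List (Sym α)) : Prop :=
  ∃ w x z, ∃ s : Tagg, IsHandleBody hash x ∧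
    u = w ++ Sum.inr Tagg.lb :: (x ++ Sum.inr Tagg.rb :: z) ∧
    v = w ++ Sum.inr s :: z ∧
    u ∈ LocFull k Φ ∧ v ∈ LocFull k Φ

/-- `⇝*_Φ`. -/
def Reduces {α : Type} (hash : α) (k : ℕ) (Φ : Set (List (Sym α))) :
    List (Sym α) → List (Sym α) → Prop :=
  Relation.ReflTransGen (RStep hash k Φ)

/-- The tagged maximal language `Red̄(Φ)`. -/
def RedBar {α : Type} (hash : α) (k : ℕ) (Φ : Set (List (Sym α))) :
    Set (List (Sym α)) :=
  {w | IsTagged w ∧ Reduces hash k Φ (wrap hash k w) (finalWord hash k)}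

/-- The maximal language `Red(Φ) = σ(Red̄(Φ))`. -/
def Red {α : Type} (hash : α) (k : ℕ) (Φ : Set (List (Sym α))) : Set (List α) :=
  erase '' RedBar hash k Φ

/-- Length-`j` factors of a plain word. -/
def plainFactors {α : Type} (j : ℕ) (w : List α) : Set (List α) :=
  {u | u.length = j ∧ u <:+: w}

/-- The `j`-strictly-locally-testable (plain) language `Loc(F)`, with
end-words `#^(j-1)`; as usual the language is `ε`-free and over `Σ - {#}`. -/
def LocPlain {α : Type} (hash : α) (j : ℕ) (F : Set (List α)) : Set (List α) :=
  {x | x ≠ [] ∧ hash ∉ x ∧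
    plainFactors j
      (List.replicate (j - 1) hash ++ x ++ List.replicate (j - 1) hash) ⊆ F}

end HOP

namespace HOP

/-- The alphabet `{a, b, #}`. -/
inductive ABH : Type where
  | a : ABH
  | b : ABH
  | h : ABH
deriving DecidableEq

open ABH Tagg

/-- The tagged 3-word set `Φ = {#[b, a]b, #⊙#, #[a, b]#, a⊙a, b[a, a]#}`. -/
def Phi7 : Set (List (Sym ABH)) :=
  {[Sum.inl h, Sum.inr lb, Sum.inl b],
   [Sum.inl a, Sum.inr rb, Sum.inl b],
   [Sum.inl h, Sum.inr dot, Sum.inl h],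
   [Sum.inl h, Sum.inr lb, Sum.inl a],
   [Sum.inl b, Sum.inr rb, Sum.inl h],
   [Sum.inl a, Sum.inr dot, Sum.inl a],
   [Sum.inl b, Sum.inr lb, Sum.inl a],
   [Sum.inl a, Sum.inr rb, Sum.inl h]}

/-- `L = a* b a* ∪ a⁺` over `{a, b}`. -/
def L7 : Set (List ABH) :=
  {x | (∃ n m : ℕ, x = List.replicate n a ++ b :: List.replicate m a) ∨
       (∃ n : ℕ, 1 ≤ n ∧ x = List.replicate n a)}


/-! ### Auxiliary machinery -/

section Aux

open List

/-- Tail of an `a`-block. -/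
def btl : ℕ → List (Sym ABH)
  | 0 => []
  | n + 1 => Sum.inr dot :: Sum.inl a :: btl n

/-- A tagged block of `n+1` letters `a` separated by `⊙`. -/
def blk (n : ℕ) : List (Sym ABH) := Sum.inl a :: btl n

lemma blk_succ (n : ℕ) : blk (n + 1) = Sum.inl a :: Sum.inr dot :: blk n := rfl

lemma isTagged_blk_append (n : ℕ) {t : Tagg} {l : List (Sym ABH)} (hl : IsTagged l) :
    IsTagged (blk n ++ Sum.inr t :: l) := by
  induction n with
  | zero => exact .cons a t hl
  | succ n ih => exact .cons a dot ih

lemma isTagged_blk (n : ℕ) : IsTagged (blk n) := by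
  induction n with
  | zero => exact .single a
  | succ n ih => exact .cons a dot ih

lemma blk_tags (n : ℕ) : ∀ t : Tagg, Sum.inr t ∈ blk n → t = dot := by
  induction n with
  | zero => intro t ht; simp [blk, btl] at ht
  | succ n ih =>
      intro t ht
      rw [blk_succ] at ht
      simp only [List.mem_cons] at ht
      rcases ht with ht | ht | ht
      · exact absurd ht (by simp)
      · exact Sum.inr.inj ht
      · exact ih t ht

lemma blk_no_h (n : ℕ) : Sum.inl ABH.h ∉ blk n := by
  induction n with
  | zero => simp [blk, btl]
  | succ n ih => rw [blk_succ]; simp [ih]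

lemma blk_no_b (n : ℕ) : Sum.inl ABH.b ∉ blk n := by
  induction n with
  | zero => simp [blk, btl]
  | succ n ih => rw [blk_succ]; simp [ih]

lemma handle_blk (n : ℕ) : IsHandleBody ABH.h (blk n) :=
  ⟨isTagged_blk n, blk_tags n, blk_no_h n⟩

lemma handle_b : IsHandleBody ABH.h [Sum.inl ABH.b] :=
  ⟨.single b, by intro t ht; simp at ht, by simp⟩

lemma erase_blk (n : ℕ) : erase (blk n) = List.replicate (n + 1) ABH.a := by
  induction n with
  | zero => rfl
  | succ n ih =>
      rw [blk_succ]
      simp only [erase, List.filterMap_cons] at ih ⊢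
      simp [ih, List.replicate_succ]

/-! Factor machinery -/

lemma tf_short {l : List (Sym ABH)} {Φ : Set (List (Sym ABH))} (hl : l.length < 3) :
    taggedFactors 3 l ⊆ Φ := by
  intro u hu
  obtain ⟨hlen, -, hinf⟩ := hu
  have := hinf.length_le
  omega

lemma tf_cons {x : Sym ABH} {l : List (Sym ABH)} {Φ : Set (List (Sym ABH))}
    (h1 : ∀ y z l', l = y :: z :: l' → IsTagged [x, y, z] → [x, y, z] ∈ Φ)
    (h2 : taggedFactors 3 l ⊆ Φ) : taggedFactors 3 (x :: l) ⊆ Φ := by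
  intro u hu
  obtain ⟨hlen, ht, hinf⟩ := hu
  rcases List.infix_cons_iff.mp hinf with hp | hi
  · obtain ⟨u1, u2, u3, rfl⟩ := List.length_eq_three.mp hlen
    obtain ⟨t, htl⟩ := hp
    rw [List.cons_append, List.cons_append, List.cons_append] at htl
    injection htl with e1 htl
    subst e1
    subst htl
    exact h1 u2 u3 _ rfl ht
  · exact h2 ⟨hlen, ht, hi⟩

lemma tf_blk (n : ℕ) {l : List (Sym ABH)}
    (h1 : taggedFactors 3 (Sum.inl a :: l) ⊆ Phi7) :
    taggedFactors 3 (blk n ++ l) ⊆ Phi7 := by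
  induction n with
  | zero => exact h1
  | succ n ih =>
      rw [blk_succ, List.cons_append, List.cons_append]
      have hshape : blk n ++ l = Sum.inl a :: (btl n ++ l) := rfl
      apply tf_cons
      · intro y z l' he _
        rw [hshape] at he
        injection he with e1 he; injection he with e2 he
        subst e1; subst e2
        simp [Phi7]
      apply tf_cons
      · intro y z l' he ht; cases ht
      · exact ih

end Aux


section Aux2

open List

lemma tf_cons3 {x y z : Sym ABH} {l : List (Sym ABH)} {Φ : Set (List (Sym ABH))}
    (h1 : IsTagged [x, y, z] → [x, y, z] ∈ Φ)
    (h2 : taggedFactors 3 (y :: z :: l) ⊆ Φ) :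
    taggedFactors 3 (x :: y :: z :: l) ⊆ Φ := by
  apply tf_cons _ h2
  intro y' z' l' he ht
  injection he with e1 he
  injection he with e2 he
  subst e1; subst e2
  exact h1 ht

lemma tf_cons_tag {t : Tagg} {l : List (Sym ABH)} {Φ : Set (List (Sym ABH))}
    (h2 : taggedFactors 3 l ⊆ Φ) : taggedFactors 3 (Sum.inr t :: l) ⊆ Φ :=
  tf_cons (fun _ _ _ _ ht => by cases ht) h2

lemma tf_blk' (n : ℕ) {l : List (Sym ABH)}
    (h1 : taggedFactors 3 (Sum.inl a :: l) ⊆ Phi7) :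
    taggedFactors 3 (Sum.inl a :: (btl n ++ l)) ⊆ Phi7 := by
  induction n with
  | zero => exact h1
  | succ n ih =>
      exact tf_cons3 (fun _ => by simp [Phi7]) (tf_cons_tag ih)

lemma IsTagged.appendTag {w l : List (Sym ABH)} (hw : IsTagged w) (t : Tagg)
    (hl : IsTagged l) : IsTagged (w ++ Sum.inr t :: l) := by
  induction hw with
  | single c => exact .cons c t hl
  | cons c t' hw ih => exact .cons c t' ih

lemma wrap_eq (w : List (Sym ABH)) :
    wrap ABH.h 3 w
      = Sum.inl ABH.h :: Sum.inr lb :: (w ++ Sum.inr rb :: [Sum.inl ABH.h]) := rfl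

lemma finalWord_eq : finalWord ABH.h 3 = [Sum.inl ABH.h, Sum.inr dot, Sum.inl ABH.h] := rfl

lemma tf_end : taggedFactors 3 (Sum.inl a :: Sum.inr rb :: [Sum.inl ABH.h]) ⊆ Phi7 :=
  tf_cons3 (fun _ => by simp [Phi7]) (tf_cons_tag (tf_short (by simp)))

lemma LF6 : finalWord ABH.h 3 ∈ LocFull 3 Phi7 := by
  refine ⟨.cons ABH.h dot (.single ABH.h), ?_⟩
  exact tf_cons3 (fun _ => by simp [Phi7]) (tf_cons_tag (tf_short (by simp)))

lemma LF5 : [Sum.inl ABH.h, Sum.inr lb, Sum.inl ABH.b, Sum.inr rb, Sum.inl ABH.h]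
    ∈ LocFull 3 Phi7 := by
  refine ⟨.cons ABH.h lb (.cons ABH.b rb (.single ABH.h)), ?_⟩
  exact tf_cons3 (fun _ => by simp [Phi7]) (tf_cons_tag
    (tf_cons3 (fun _ => by simp [Phi7]) (tf_cons_tag (tf_short (by simp)))))

lemma LF1 (k : ℕ) :
    Sum.inl ABH.h :: Sum.inr lb :: (blk k ++ Sum.inr rb :: [Sum.inl ABH.h])
      ∈ LocFull 3 Phi7 := by
  refine ⟨.cons ABH.h lb ((isTagged_blk k).appendTag rb (.single ABH.h)), ?_⟩
  show taggedFactors 3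
    (Sum.inl ABH.h :: Sum.inr lb :: Sum.inl a ::
      (btl k ++ Sum.inr rb :: [Sum.inl ABH.h])) ⊆ Phi7
  exact tf_cons3 (fun _ => by simp [Phi7]) (tf_cons_tag (tf_blk' k tf_end))

lemma LF4 (k : ℕ) :
    Sum.inl ABH.h :: Sum.inr lb ::
      (blk k ++ [Sum.inr rb, Sum.inl ABH.b, Sum.inr rb, Sum.inl ABH.h])
      ∈ LocFull 3 Phi7 := by
  refine ⟨.cons ABH.h lb ((isTagged_blk k).appendTag rb (.cons ABH.b rb (.single ABH.h))), ?_⟩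
  show taggedFactors 3
    (Sum.inl ABH.h :: Sum.inr lb :: Sum.inl a ::
      (btl k ++ [Sum.inr rb, Sum.inl ABH.b, Sum.inr rb, Sum.inl ABH.h])) ⊆ Phi7
  refine tf_cons3 (fun _ => by simp [Phi7]) (tf_cons_tag (tf_blk' k ?_))
  exact tf_cons3 (fun _ => by simp [Phi7]) (tf_cons_tag
    (tf_cons3 (fun _ => by simp [Phi7]) (tf_cons_tag (tf_short (by simp)))))

lemma LF3 (j : ℕ) :
    Sum.inl ABH.h :: Sum.inr lb :: Sum.inl ABH.b :: Sum.inr lb ::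
      (blk j ++ Sum.inr rb :: [Sum.inl ABH.h]) ∈ LocFull 3 Phi7 := by
  refine ⟨.cons ABH.h lb (.cons ABH.b lb ((isTagged_blk j).appendTag rb (.single ABH.h))), ?_⟩
  show taggedFactors 3
    (Sum.inl ABH.h :: Sum.inr lb :: Sum.inl ABH.b :: Sum.inr lb :: Sum.inl a ::
      (btl j ++ Sum.inr rb :: [Sum.inl ABH.h])) ⊆ Phi7
  exact tf_cons3 (fun _ => by simp [Phi7]) (tf_cons_tag
    (tf_cons3 (fun _ => by simp [Phi7]) (tf_cons_tag (tf_blk' j tf_end))))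

lemma LF2 (k j : ℕ) :
    Sum.inl ABH.h :: Sum.inr lb ::
      (blk k ++ Sum.inr rb :: Sum.inl ABH.b :: Sum.inr lb ::
        (blk j ++ Sum.inr rb :: [Sum.inl ABH.h])) ∈ LocFull 3 Phi7 := by
  refine ⟨.cons ABH.h lb ((isTagged_blk k).appendTag rb
    (.cons ABH.b lb ((isTagged_blk j).appendTag rb (.single ABH.h)))), ?_⟩
  show taggedFactors 3
    (Sum.inl ABH.h :: Sum.inr lb :: Sum.inl a ::
      (btl k ++ Sum.inr rb :: Sum.inl ABH.b :: Sum.inr lb :: Sum.inl a ::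
        (btl j ++ Sum.inr rb :: [Sum.inl ABH.h]))) ⊆ Phi7
  refine tf_cons3 (fun _ => by simp [Phi7]) (tf_cons_tag (tf_blk' k ?_))
  exact tf_cons3 (fun _ => by simp [Phi7]) (tf_cons_tag
    (tf_cons3 (fun _ => by simp [Phi7]) (tf_cons_tag (tf_blk' j tf_end))))

lemma erase_cons_inl (c : ABH) (l : List (Sym ABH)) :
    erase (Sum.inl c :: l) = c :: erase l := by simp [erase, Sum.getLeft?]

lemma erase_cons_inr (t : Tagg) (l : List (Sym ABH)) :
    erase (Sum.inr t :: l) = erase l := rfl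

lemma erase_append (u v : List (Sym ABH)) : erase (u ++ v) = erase u ++ erase v :=
  List.filterMap_append

lemma erase_blk' (k : ℕ) :
    List.filterMap Sum.getLeft? (blk k) = ABH.a :: List.replicate k ABH.a := by
  have := erase_blk k
  simpa [erase, List.replicate_succ] using this

/-- The step `h[b]h ⇝ h⊙h`. -/
lemma step_final :
    RStep ABH.h 3 Phi7 [Sum.inl ABH.h, Sum.inr lb, Sum.inl ABH.b, Sum.inr rb, Sum.inl ABH.h]
      (finalWord ABH.h 3) :=
  ⟨[Sum.inl ABH.h], [Sum.inl ABH.b], [Sum.inl ABH.h], dot, handle_b, rfl, rfl, LF5, LF6⟩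

lemma forward : L7 ⊆ Red ABH.h 3 Phi7 := by
  rintro x (⟨n, m, rfl⟩ | ⟨n, hn, rfl⟩)
  · -- `a^n b a^m`
    match n, m with
    | 0, 0 =>
        refine ⟨[Sum.inl ABH.b], ⟨.single ABH.b, ?_⟩, by simp [erase_cons_inl, erase]⟩
        exact Relation.ReflTransGen.single (by rw [wrap_eq]; exact step_final)
    | 0, j+1 =>
        refine ⟨Sum.inl ABH.b :: Sum.inr lb :: blk j,
          ⟨.cons ABH.b lb (isTagged_blk j), ?_⟩, ?_⟩
        · refine Relation.ReflTransGen.head ?_ (Relation.ReflTransGen.single step_final)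
          refine ⟨[Sum.inl ABH.h, Sum.inr lb, Sum.inl ABH.b], blk j, [Sum.inl ABH.h], rb,
            handle_blk j, ?_, rfl, ?_, LF5⟩
          · rw [wrap_eq]; simp
          · rw [wrap_eq]; exact LF3 j
        · simp [erase_cons_inl, erase_cons_inr, erase_blk, List.replicate_succ]
    | k+1, 0 =>
        refine ⟨blk k ++ [Sum.inr rb, Sum.inl ABH.b],
          ⟨(isTagged_blk k).appendTag rb (.single ABH.b), ?_⟩, ?_⟩
        · refine Relation.ReflTransGen.head ?_ (Relation.ReflTransGen.single step_final)
          refine ⟨[Sum.inl ABH.h], blk k, [Sum.inl ABH.b, Sum.inr rb, Sum.inl ABH.h], lb,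
            handle_blk k, ?_, rfl, ?_, LF5⟩
          · rw [wrap_eq]; simp
          · rw [wrap_eq]; simpa using LF4 k
        · simp [erase_append, erase_cons_inl, erase_cons_inr, erase_blk', erase,
            List.replicate_succ, List.filterMap_cons]
    | k+1, j+1 =>
        refine ⟨blk k ++ Sum.inr rb :: Sum.inl ABH.b :: Sum.inr lb :: blk j,
          ⟨(isTagged_blk k).appendTag rb (.cons ABH.b lb (isTagged_blk j)), ?_⟩, ?_⟩
        · refine Relation.ReflTransGen.head
            (b := Sum.inl ABH.h :: Sum.inr lb ::
              (blk k ++ [Sum.inr rb, Sum.inl ABH.b, Sum.inr rb, Sum.inl ABH.h])) ?_ ?_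
          · refine ⟨Sum.inl ABH.h :: Sum.inr lb :: (blk k ++ [Sum.inr rb, Sum.inl ABH.b]),
              blk j, [Sum.inl ABH.h], rb, handle_blk j, ?_, ?_, ?_, ?_⟩
            · rw [wrap_eq]; simp
            · simp
            · rw [wrap_eq]; simpa using LF2 k j
            · simpa using LF4 k
          refine Relation.ReflTransGen.head ?_ (Relation.ReflTransGen.single step_final)
          refine ⟨[Sum.inl ABH.h], blk k, [Sum.inl ABH.b, Sum.inr rb, Sum.inl ABH.h], lb,
            handle_blk k, ?_, rfl, ?_, LF5⟩
          · simp
          · simpa using LF4 k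
        · simp [erase_append, erase_cons_inl, erase_cons_inr, erase_blk', erase,
            List.replicate_succ, List.filterMap_cons]
  · obtain ⟨k, rfl⟩ : ∃ k, n = k + 1 := ⟨n - 1, by omega⟩
    refine ⟨blk k, ⟨isTagged_blk k, ?_⟩, by simp [erase_blk]⟩
    refine Relation.ReflTransGen.single ?_
    exact ⟨[Sum.inl ABH.h], blk k, [Sum.inl ABH.h], dot, handle_blk k, by rw [wrap_eq]; simp,
      rfl, by rw [wrap_eq]; exact LF1 k, LF6⟩

end Aux2


section Aux3

open List

@[simp] lemma beq_inr_inl (t : Tagg) (c : ABH) :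
    ((Sum.inr t : Sym ABH) == Sum.inl c) = false := by cases t <;> cases c <;> rfl
@[simp] lemma beq_inl_inr (c : ABH) (t : Tagg) :
    ((Sum.inl c : Sym ABH) == Sum.inr t) = false := by cases c <;> cases t <;> rfl
@[simp] lemma beq_inl_inl (c d : ABH) :
    ((Sum.inl c : Sym ABH) == Sum.inl d) = decide (c = d) := by
  cases c <;> cases d <;> rfl
@[simp] lemma beq_inr_inr (t u : Tagg) :
    ((Sum.inr t : Sym ABH) == Sum.inr u) = decide (t = u) := by
  cases t <;> cases u <;> rfl

lemma sym_beq_false {x y : Sym ABH} (hxy : x ≠ y) : (x == y) = false := by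
  rcases x with c | t <;> rcases y with d | u <;> simp_all

lemma sym_count_eq_zero {c : Sym ABH} {l : List (Sym ABH)} (hc : c ∉ l) :
    List.count c l = 0 := by
  induction l with
  | nil => rfl
  | cons x l ih =>
      rw [List.count_cons, ih (fun hm => hc (List.mem_cons_of_mem _ hm))]
      simp only [List.mem_cons, not_or] at hc
      rw [sym_beq_false (Ne.symm hc.1)]
      rfl

lemma sym_count_pos {c : Sym ABH} {l : List (Sym ABH)} (hc : c ∈ l) :
    1 ≤ List.count c l := by
  induction l with
  | nil => simp at hc
  | cons x l ih =>
      rw [List.count_cons]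
      rcases List.mem_cons.mp hc with e | hm
      · subst e
        have : (c == c) = true := by
          rcases c with d | u <;> simp
        rw [this, if_pos rfl]; omega
      · have := ih hm; omega

/-- Head of a tagged word is a terminal. -/
lemma tagged_head {w : List (Sym ABH)} (hw : IsTagged w) :
    ∃ c r, w = Sum.inl c :: r := by
  cases hw with
  | single c => exact ⟨c, [], rfl⟩
  | cons c t _ => exact ⟨c, _, rfl⟩

/-- In a tagged word, the symbol before a tag is a terminal. -/
lemma tagged_before_tag {u : List (Sym ABH)} (hu : IsTagged u) :
    ∀ p t q, u = p ++ Sum.inr t :: q → ∃ p' c, p = p' ++ [Sum.inl c] := by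
  induction hu with
  | single c =>
      intro p t q hpq
      match p, hpq with
      | [], hpq => injection hpq with e _; exact absurd e (by simp)
      | [x], hpq =>
          injection hpq with _ e; exact absurd e (by simp)
  | cons c t0 hw ih =>
      intro p t q hpq
      match p, hpq with
      | [], hpq => injection hpq with e _; exact absurd e (by simp)
      | [x], hpq =>
          injection hpq with e1 _
          exact ⟨[], c, by rw [e1]; rfl⟩
      | x :: y :: p', hpq =>
          injection hpq with e1 hpq
          injection hpq with e2 hpq
          obtain ⟨p'', c', hp⟩ := ih p' t q hpq
          exact ⟨x :: y :: p'', c', by rw [hp]; rfl⟩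

/-- In a tagged word, the symbol after a tag is a terminal. -/
lemma tagged_after_tag {u : List (Sym ABH)} (hu : IsTagged u) :
    ∀ p t q, u = p ++ Sum.inr t :: q → ∃ c q', q = Sum.inl c :: q' := by
  induction hu with
  | single c =>
      intro p t q hpq
      match p, hpq with
      | [], hpq => injection hpq with e _; exact absurd e (by simp)
      | [x], hpq => injection hpq with _ e; exact absurd e (by simp)
  | cons c t0 hw ih =>
      intro p t q hpq
      match p, hpq with
      | [], hpq => injection hpq with e _; exact absurd e (by simp)
      | [x], hpq =>
          injection hpq with _ hpq
          injection hpq with _ e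
          obtain ⟨c', r, hr⟩ := tagged_head hw
          exact ⟨c', r, by rw [← e, hr]⟩
      | x :: y :: p', hpq =>
          injection hpq with e1 hpq
          injection hpq with e2 hpq
          exact ih p' t q hpq

/-- A handle body whose tagged 3-factors are in `Phi7` and which contains `b`
is exactly `[b]`. -/
lemma body_single : ∀ x : List (Sym ABH), IsTagged x →
    (∀ t : Tagg, Sum.inr t ∈ x → t = dot) → Sum.inl ABH.h ∉ x →
    (∀ tr : List (Sym ABH), tr.length = 3 → IsTagged tr → tr <:+: x → tr ∈ Phi7) →
    Sum.inl ABH.b ∈ x → x = [Sum.inl ABH.b] := by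
  intro x hx
  induction hx with
  | single c =>
      intro _ _ _ hb
      rcases List.mem_singleton.mp hb with e
      rw [← e]
  | cons c t hw ih =>
      intro hdot hh htr hb
      rename_i w'
      have ht' : t = dot := hdot t (by simp)
      subst ht'
      obtain ⟨c', r, hr⟩ := tagged_head hw
      have tr1 : [Sum.inl c, Sum.inr dot, Sum.inl c'] ∈ Phi7 := by
        refine htr _ rfl (.cons c dot (.single c')) ⟨[], r, ?_⟩
        rw [hr]; rfl
      have hcc : c = ABH.a ∧ c' = ABH.a := by
        have h1 : c ≠ ABH.h := fun e => hh (by rw [e]; simp)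
        have h2 : c' ≠ ABH.h := fun e => hh (by rw [hr, e]; simp)
        simp only [Phi7, Set.mem_insert_iff, Set.mem_singleton_iff] at tr1
        rcases tr1 with e|e|e|e|e|e|e|e <;> simp at e
        · exact absurd e.1 h1
        · exact e
      have hb' : Sum.inl ABH.b ∈ w' := by
        rcases List.mem_cons.mp hb with e | hb
        · exact absurd (Sum.inl.inj e).symm (by rw [hcc.1]; simp)
        rcases List.mem_cons.mp hb with e | hb
        · exact absurd e (by simp)
        · exact hb
      have hw'eq : w' = [Sum.inl ABH.b] := by
        refine ih (fun t' ht'' => hdot t' (by simp [ht''])) (fun hx => hh (by simp [hx]))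
          (fun tr hl htg hinf => htr tr hl htg
            (hinf.trans (((List.suffix_cons _ _).trans (List.suffix_cons _ _)).isInfix)))
          hb'
      rw [hw'eq] at hr
      injection hr with e _
      exact absurd (Sum.inl.inj e) (by rw [hcc.2]; simp)

/-- `RStep` preserves the number of `#`s. -/
lemma rstep_count_h {u v : List (Sym ABH)} (hs : RStep ABH.h 3 Phi7 u v) :
    List.count (Sum.inl ABH.h) u = List.count (Sum.inl ABH.h) v := by
  obtain ⟨w, x, z, s, ⟨_, _, hxh⟩, rfl, rfl, _, _⟩ := hs
  have hx0 : List.count (Sum.inl ABH.h) x = 0 := sym_count_eq_zero hxh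
  simp [List.count_append, List.count_cons, hx0]

lemma reduces_count_h {u v : List (Sym ABH)} (hred : Reduces ABH.h 3 Phi7 u v) :
    List.count (Sum.inl ABH.h) u = List.count (Sum.inl ABH.h) v := by
  induction hred with
  | refl => rfl
  | tail hab hbc ih => exact ih.trans (rstep_count_h hbc)

/-- Invariant: starts with `#`, ends with `#`, and contains exactly two `#`s. -/
def Qh (u : List (Sym ABH)) : Prop :=
  u.head? = some (Sum.inl ABH.h) ∧ u.getLast? = some (Sum.inl ABH.h) ∧
    List.count (Sum.inl ABH.h) u = 2

lemma rstep_Q {u v : List (Sym ABH)} (hs : RStep ABH.h 3 Phi7 u v) (hQ : Qh u) : Qh v := by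
  obtain ⟨w, x, z, s, ⟨_, _, hxh⟩, rfl, rfl, _, _⟩ := hs
  obtain ⟨hhd, hlast, hcnt⟩ := hQ
  have hx0 : List.count (Sum.inl ABH.h) x = 0 := sym_count_eq_zero hxh
  match w with
  | [] => exact absurd hhd (by simp)
  | w0 :: wt =>
    match z with
    | [] =>
        exfalso
        have he : w0 :: wt ++ Sum.inr Tagg.lb :: (x ++ Sum.inr Tagg.rb :: ([] : List (Sym ABH)))
            = ((w0 :: wt ++ Sum.inr Tagg.lb :: x) ++ [Sum.inr Tagg.rb]) := by simp
        rw [he, List.getLast?_concat] at hlast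
        exact absurd (Option.some.inj hlast) (by simp)
    | z0 :: zt =>
        refine ⟨by simpa using hhd, ?_, ?_⟩
        · have he : w0 :: wt ++ Sum.inr Tagg.lb :: (x ++ Sum.inr Tagg.rb :: (z0 :: zt))
              = ((w0 :: wt ++ Sum.inr Tagg.lb :: x) ++ [Sum.inr Tagg.rb]) ++ (z0 :: zt) := by
            simp
          rw [he, List.getLast?_append] at hlast
          have he2 : w0 :: wt ++ Sum.inr s :: (z0 :: zt)
              = ((w0 :: wt) ++ [Sum.inr s]) ++ (z0 :: zt) := by simp
          rw [he2, List.getLast?_append]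
          obtain ⟨g, hg⟩ := Option.isSome_iff_exists.mp
            (List.getLast?_isSome.mpr (List.cons_ne_nil z0 zt))
          rw [hg] at hlast ⊢
          simpa using hlast
        · simp only [List.count_append, List.count_cons, hx0] at hcnt ⊢
          simp at hcnt ⊢
          omega

lemma reduces_count_b : ∀ u : List (Sym ABH),
    Reduces ABH.h 3 Phi7 u (finalWord ABH.h 3) → Qh u →
    List.count (Sum.inl ABH.b) u ≤ 1 := by
  intro u hred
  induction hred using Relation.ReflTransGen.head_induction_on with
  | refl => intro _; simp [finalWord_eq, List.count_cons]
  | head hstep hrest ih =>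
      intro hQ
      have hQv := rstep_Q hstep hQ
      have hv1 := ih hQv
      obtain ⟨w, x, z, s, hbody, hu, hv, hlocu, hlocv⟩ := hstep
      subst hu; subst hv
      rcases Classical.em (Sum.inl ABH.b ∈ x) with hbx | hbx
      · -- the handle body is `[b]`, and the whole word is `#[b]#`
        have hx : x = [Sum.inl ABH.b] := by
          refine body_single x hbody.1 hbody.2.1 hbody.2.2 ?_ hbx
          intro tr hl htg hinf
          refine hlocu.2 ⟨hl, htg, hinf.trans ⟨w ++ [Sum.inr Tagg.lb], Sum.inr Tagg.rb :: z, by simp⟩⟩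
        subst hx
        -- the terminal before the `[` is `#`
        obtain ⟨w'', c, hw⟩ := tagged_before_tag hlocu.1 w Tagg.lb _ rfl
        have hch : c = ABH.h := by
          have tr1 : [Sum.inl c, Sum.inr Tagg.lb, Sum.inl ABH.b] ∈ Phi7 := by
            refine hlocu.2 ⟨rfl, .cons c Tagg.lb (.single ABH.b), ⟨w'', Sum.inr Tagg.rb :: z, by rw [hw]; simp⟩⟩
          simp only [Phi7, Set.mem_insert_iff, Set.mem_singleton_iff] at tr1
          rcases tr1 with e|e|e|e|e|e|e|e <;> simp at e
          exact e
        subst hch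
        -- the terminal after the `]` is `#`
        have hu2 : w ++ Sum.inr Tagg.lb :: ([Sum.inl ABH.b] ++ Sum.inr Tagg.rb :: z)
            = (w ++ [Sum.inr Tagg.lb, Sum.inl ABH.b]) ++ Sum.inr Tagg.rb :: z := by simp
        obtain ⟨c', z', hz⟩ := tagged_after_tag hlocu.1 _ Tagg.rb _ hu2
        have hch' : c' = ABH.h := by
          have tr2 : [Sum.inl ABH.b, Sum.inr Tagg.rb, Sum.inl c'] ∈ Phi7 := by
            refine hlocu.2 ⟨rfl, .cons ABH.b Tagg.rb (.single c'), ⟨w ++ [Sum.inr Tagg.lb], z', by rw [hz]; simp⟩⟩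
          simp only [Phi7, Set.mem_insert_iff, Set.mem_singleton_iff] at tr2
          rcases tr2 with e|e|e|e|e|e|e|e <;> simp at e
          exact e
        subst hch'
        subst hw; subst hz
        obtain ⟨hhd, hlast, hcnt⟩ := hQ
        -- w'' = []
        have hw0 : w'' = [] := by
          match w'' with
          | [] => rfl
          | d :: w3 =>
              exfalso
              have hd : d = Sum.inl ABH.h := by simpa using hhd
              subst hd
              simp [List.count_append, List.count_cons] at hcnt
              omega
        -- z' = []
        have hz0 : z' = [] := by
          match z' with
          | [] => rfl
          | e :: z3 =>
              exfalso
              have he : (w'' ++ [Sum.inl ABH.h]) ++ Sum.inr Tagg.lb ::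
                  ([Sum.inl ABH.b] ++ Sum.inr Tagg.rb :: (Sum.inl ABH.h :: (e :: z3)))
                  = ((w'' ++ [Sum.inl ABH.h]) ++ [Sum.inr Tagg.lb, Sum.inl ABH.b,
                      Sum.inr Tagg.rb, Sum.inl ABH.h]) ++ (e :: z3) := by simp
              rw [he, List.getLast?_append] at hlast
              obtain ⟨g, hg⟩ := Option.isSome_iff_exists.mp
                (List.getLast?_isSome.mpr (List.cons_ne_nil e z3))
              rw [hg] at hlast
              have hgh : g = Sum.inl ABH.h := by simpa using hlast
              have hgm : g ∈ e :: z3 := List.mem_of_mem_getLast? (by rw [hg]; rfl)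
              rw [hgh] at hgm
              have hge : 1 ≤ List.count (Sum.inl ABH.h) (e :: z3) := sym_count_pos hgm
              simp [List.count_append, List.count_cons] at hcnt hge
              omega
        subst hw0; subst hz0
        simp [List.count_append, List.count_cons]
      · -- no `b` is removed
        have hx0 : List.count (Sum.inl ABH.b) x = 0 := sym_count_eq_zero hbx
        simp only [List.count_append, List.count_cons, hx0] at hv1 ⊢
        simp at hv1 ⊢
        omega

/-- Any tagged word over `{a,b}` with at most one `b` erases into `L7`. -/
lemma erase_shape : ∀ {w : List (Sym ABH)}, IsTagged w → Sum.inl ABH.h ∉ w →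
    List.count (Sum.inl ABH.b) w ≤ 1 → erase w ∈ L7 := by
  intro w hw
  induction hw with
  | single c =>
      intro hh hb
      match c with
      | ABH.a => exact Or.inr ⟨1, le_refl 1, by simp [erase, Sum.getLeft?]⟩
      | ABH.b => exact Or.inl ⟨0, 0, by simp [erase, Sum.getLeft?]⟩
      | ABH.h => simp at hh
  | cons c t hw' ih =>
      intro hh hb
      rename_i w'
      have hh' : Sum.inl ABH.h ∉ w' := fun hx => hh (by simp [hx])
      rw [erase_cons_inl, erase_cons_inr]
      match c with
      | ABH.h => exact absurd List.mem_cons_self hh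
      | ABH.a =>
          have hb' : List.count (Sum.inl ABH.b) w' ≤ 1 := by
            simp [List.count_cons] at hb; omega
          rcases ih hh' hb' with ⟨n, m, he⟩ | ⟨n, hn, he⟩
          · exact Or.inl ⟨n + 1, m, by rw [he]; simp [List.replicate_succ]⟩
          · exact Or.inr ⟨n + 1, by omega, by rw [he]; simp [List.replicate_succ]⟩
      | ABH.b =>
          have hb0 : Sum.inl ABH.b ∉ w' := by
            intro hmem
            have := sym_count_pos hmem
            simp [List.count_cons] at hb
            omega
          rcases ih hh' (by rw [sym_count_eq_zero hb0]; omega) with ⟨n, m, he⟩ | ⟨n, hn, he⟩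
          · exfalso
            have : ABH.b ∈ erase w' := by rw [he]; simp
            obtain ⟨y, hy, hy2⟩ := List.mem_filterMap.mp this
            have : y = Sum.inl ABH.b := by
              match y with
              | Sum.inl c' => simp [Sum.getLeft?] at hy2; rw [hy2]
              | Sum.inr t' => simp [Sum.getLeft?] at hy2
            rw [this] at hy
            exact hb0 hy
          · exact Or.inl ⟨0, n, by rw [he]; rfl⟩

lemma nonConf : NonConflictual Phi7 := by
  rintro ⟨x, hx, y, hy, hne, he⟩
  simp only [Phi7, Set.mem_insert_iff, Set.mem_singleton_iff] at hx hy
  rcases hx with rfl|rfl|rfl|rfl|rfl|rfl|rfl|rfl <;>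
    rcases hy with rfl|rfl|rfl|rfl|rfl|rfl|rfl|rfl <;>
      simp_all [erase, Sum.getLeft?, List.filterMap_cons]

end Aux3

/-- From the proof of Theorem 2: `a* b a* ∪ a⁺` is the maximal language
`Red(Φ)` of order 3 defined by the non-conflictual set
`Φ = {#[b, a]b, #⊙#, #[a, b]#, a⊙a, b[a, a]#}`. -/
theorem red_example : NonConflictual Phi7 ∧ Red ABH.h 3 Phi7 = L7 := by
  refine ⟨nonConf, Set.Subset.antisymm ?_ forward⟩
  rintro x ⟨w, ⟨hwt, hred⟩, rfl⟩
  have hch : List.count (Sum.inl ABH.h) (wrap ABH.h 3 w) = 2 := by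
    rw [reduces_count_h hred]
    simp [finalWord_eq, List.count_cons]
  have hlast : (wrap ABH.h 3 w).getLast? = some (Sum.inl ABH.h) := by
    have he : wrap ABH.h 3 w
        = (Sum.inl ABH.h :: Sum.inr Tagg.lb :: (w ++ [Sum.inr Tagg.rb])) ++ [Sum.inl ABH.h] := by
      rw [wrap_eq]; simp
    rw [he, List.getLast?_concat]
  have hQ : Qh (wrap ABH.h 3 w) := ⟨by rw [wrap_eq]; rfl, hlast, hch⟩
  have hcb := reduces_count_b _ hred hQ
  have hhw : Sum.inl ABH.h ∉ w := by
    rw [wrap_eq] at hch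
    simp [List.count_append, List.count_cons] at hch
    intro hm
    have := sym_count_pos hm
    omega
  have hbw : List.count (Sum.inl ABH.b) w ≤ 1 := by
    rw [wrap_eq] at hcb
    simp [List.count_append, List.count_cons] at hcb
    omega
  exact erase_shape hwt hhw hbw

end HOP
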